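/- For every l ∈ {1,…,m}, the projection P_l fixes the weighted graph state: P_l |G⟩ = |G⟩. Consequently Ω(𝒜)|G⟩ = |G⟩, so ⟨G|Ω(𝒜)|G⟩ = 1 and |G⟩⟨G| ≤ Ω(𝒜) ≤ I. -/

import Mathlib

open scoped BigOperators ComplexOrder
open Matrix Complex

noncomputable section

/-- Computational-basis index set of `(ℂ²)^{⊗n}`. -/
abbrev QIdx (n : ℕ) := Fin n → Fin 2

/-- Linear operators on `(ℂ²)^{⊗n}`, represented as matrices. -/
abbrev QOp (n : ℕ) := Matrix (QIdx n) (QIdx n) ℂ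

/-- A bit viewed as a real number. -/
def bR (b : Fin 2) : ℝ := (b : ℕ)

/-- The ℓ²→ℓ² operator norm of a matrix. -/
noncomputable def opNorm {ι : Type*} [Fintype ι] [DecidableEq ι] (M : Matrix ι ι ℂ) : ℝ :=
  ‖Matrix.toEuclideanCLM (𝕜 := ℂ) M‖

/-- The weighted graph state `|G⟩`, as amplitudes
`⟨z|G⟩ = 2^{-n/2} ∏_{j<k} e^{i θ_{jk} z_j z_k}` (for symmetric `θ`,
`∑_{j<k} = (1/2) ∑_{j,k}`). -/
noncomputable def gVec (n : ℕ) (θ : Fin n → Fin n → ℝ) : QIdx n → ℂ :=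
  fun z => ((Real.sqrt (2 ^ n))⁻¹ : ℝ) *
    Complex.exp (Complex.I * ((1 / 2 * ∑ j, ∑ k, θ j k * bR (z j) * bR (z k) : ℝ) : ℂ))

/-- The rank-one projection `|G⟩⟨G|`. -/
noncomputable def gProj (n : ℕ) (θ : Fin n → Fin n → ℝ) : QOp n :=
  Matrix.vecMulVec (gVec n θ) (star (gVec n θ))

/-- `α_k(z) = ∑_{j ∈ C_k} θ_{jk} z_j` (using `θ_{jk} = 0` on non-edges). -/
noncomputable def alphaAngle (n : ℕ) (θ : Fin n → Fin n → ℝ) (k : Fin n) (z : QIdx n) : ℝ :=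
  ∑ j, θ j k * bR (z j)

/-- The discretization `α ↦ α^h`, the unique point `jπ/h` with
`jπ/h - π/(2h) ≤ α < jπ/h + π/(2h)`. -/
noncomputable def alphaH (h : ℕ) (α : ℝ) : ℝ :=
  (⌊(h : ℝ) * α / Real.pi + 1 / 2⌋ : ℤ) * Real.pi / h

/-- Matrix entry `⟨b|α⟩⟨α|b'⟩ = (1/2) e^{iα(b-b')}` of the projection onto
`|α⟩ = (|0⟩ + e^{iα}|1⟩)/√2`. -/
noncomputable def phaseFac (α : ℝ) (b b' : Fin 2) : ℂ :=
  (1 / 2 : ℂ) * Complex.exp (Complex.I * ((α * (bR b - bR b') : ℝ) : ℂ))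

/-- The projection `P_l = ∏_{k ∈ A_l} Q_k`, written out entrywise:
`P_l = ∑_z (⊗_{k∈A_l} |α_k(z)⟩⟨α_k(z)|) ⊗ |z⟩⟨z|_{A_l^c}`. -/
noncomputable def Pop (n : ℕ) (θ : Fin n → Fin n → ℝ) (A : Finset (Fin n)) : QOp n :=
  Matrix.of fun x y =>
    if ∀ j ∉ A, x j = y j then ∏ k ∈ A, phaseFac (alphaAngle n θ k x) (x k) (y k) else 0

/-- The test operator `Ω(𝒜) = (1/m) ∑_l P_l`. -/
noncomputable def OmegaA (n m : ℕ) (θ : Fin n → Fin n → ℝ) (A : Fin m → Finset (Fin n)) :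
    QOp n :=
  (m : ℂ)⁻¹ • ∑ l, Pop n θ (A l)

/-- The discretized projection `P_{l;h}` (replace `α_k(z)` by `α_k^h(z)`). -/
noncomputable def PopH (n : ℕ) (θ : Fin n → Fin n → ℝ) (h : ℕ) (A : Finset (Fin n)) : QOp n :=
  Matrix.of fun x y =>
    if ∀ j ∉ A, x j = y j then
      ∏ k ∈ A, phaseFac (alphaH h (alphaAngle n θ k x)) (x k) (y k) else 0

/-- The discretized test operator `Ω_h(𝒜) = (1/m) ∑_l P_{l;h}`. -/
noncomputable def OmegaAH (n m : ℕ) (θ : Fin n → Fin n → ℝ) (h : ℕ)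
    (A : Fin m → Finset (Fin n)) : QOp n :=
  (m : ℂ)⁻¹ • ∑ l, PopH n θ h (A l)

/-- Entry of the single-site operator `(1/h) |α⟩⟨α| + (1 - 1/h) I`. -/
noncomputable def mixFac (h : ℕ) (α : ℝ) (b b' : Fin 2) : ℂ :=
  (1 - (h : ℂ)⁻¹) * (if b = b' then 1 else 0) + (h : ℂ)⁻¹ * phaseFac α b b'

/-- `P̄_l = ∏_{k ∈ A_l} ((1/h(k)) Q_k + (1 - 1/h(k)) I)`, written out entrywise. -/
noncomputable def PBar (n : ℕ) (θ : Fin n → Fin n → ℝ) (hf : Fin n → ℕ) (A : Finset (Fin n)) :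
    QOp n :=
  Matrix.of fun x y =>
    if ∀ j ∉ A, x j = y j then ∏ k ∈ A, mixFac (hf k) (alphaAngle n θ k x) (x k) (y k) else 0

/-- `Ω̄(𝒜)_𝐡 = (1/m) ∑_l P̄_l`. -/
noncomputable def OmegaBar (n m : ℕ) (θ : Fin n → Fin n → ℝ) (hf : Fin n → ℕ)
    (A : Fin m → Finset (Fin n)) : QOp n :=
  (m : ℂ)⁻¹ • ∑ l, PBar n θ hf (A l)

/-- `P̄_{l;h} = ∏_{k ∈ A_l} ((1/h) Q_{k;h} + (1 - 1/h) I)`, written out entrywise. -/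
noncomputable def PBarH (n : ℕ) (θ : Fin n → Fin n → ℝ) (h : ℕ) (A : Finset (Fin n)) : QOp n :=
  Matrix.of fun x y =>
    if ∀ j ∉ A, x j = y j then
      ∏ k ∈ A, mixFac h (alphaH h (alphaAngle n θ k x)) (x k) (y k) else 0

/-- `Ω̄_h(𝒜) = (1/m) ∑_l P̄_{l;h}`. -/
noncomputable def OmegaBarH (n m : ℕ) (θ : Fin n → Fin n → ℝ) (h : ℕ)
    (A : Fin m → Finset (Fin n)) : QOp n :=
  (m : ℂ)⁻¹ • ∑ l, PBarH n θ h (A l)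

/-- Index set for `N+1` copies of the `n`-qubit space. -/
abbrev BIdx (n N : ℕ) := Fin (N + 1) → QIdx n

/-- `(⊗_{j ≠ i} Ω) ⊗ I_i` acting on the `N+1` copies. -/
noncomputable def testAll (n N : ℕ) (Ω : QOp n) (i : Fin (N + 1)) :
    Matrix (BIdx n N) (BIdx n N) ℂ :=
  Matrix.of fun x y =>
    (if x i = y i then 1 else 0) * ∏ j ∈ Finset.univ.erase i, Ω (x j) (y j)

/-- Acceptance probability `p = (1/(N+1)) ∑_i Tr[((⊗_{j≠i} Ω) ⊗ I_i) ρ]` of the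
`N`-random sampling test of `Ω` on a state `ρ` of `N+1` copies. -/
noncomputable def acceptProb (n N : ℕ) (Ω : QOp n) (ρ : Matrix (BIdx n N) (BIdx n N) ℂ) : ℝ :=
  (((N : ℂ) + 1)⁻¹ * ∑ i, (testAll n N Ω i * ρ).trace).re

/-- Partial trace over all copies except copy `i`. -/
noncomputable def ptraceAt (n N : ℕ) (i : Fin (N + 1))
    (M : Matrix (BIdx n N) (BIdx n N) ℂ) : QOp n :=
  Matrix.of fun a b => ∑ x : BIdx n N, if x i = a then M x (Function.update x i b) else 0

/-- The conditional state of the remaining copy given that the test is passed: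
`σ = (1/((N+1)p)) ∑_i Tr_{j≠i}[((⊗_{j≠i} Ω) ⊗ I_i) ρ]`. -/
noncomputable def condState (n N : ℕ) (Ω : QOp n) (ρ : Matrix (BIdx n N) (BIdx n N) ℂ) :
    QOp n :=
  (((((N : ℝ) + 1) * acceptProb n N Ω ρ : ℝ) : ℂ))⁻¹ •
    ∑ i, ptraceAt n N i (testAll n N Ω i * ρ)

/-- The i.i.d. state `(|G⟩⟨G|)^{⊗(N+1)}`. -/
noncomputable def iidState (n N : ℕ) (θ : Fin n → Fin n → ℝ) :
    Matrix (BIdx n N) (BIdx n N) ℂ :=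
  Matrix.of fun x y => ∏ j, gVec n θ (x j) * star (gVec n θ (y j))


namespace GraphStateAux

variable {n : ℕ}

lemma card_match (A : Finset (Fin n)) (x : QIdx n) :
    (Finset.univ.filter (fun w : QIdx n => ∀ j ∉ A, x j = w j)).card = 2 ^ A.card := by
  rw [← Fintype.card_subtype]
  have e : {w : QIdx n // ∀ j ∉ A, x j = w j} ≃ (A → Fin 2) :=
    { toFun := fun w k => w.1 k
      invFun := fun g =>
        ⟨fun j => if h : j ∈ A then g ⟨j, h⟩ else x j, fun j hj => by simp [hj]⟩
      left_inv := fun w => by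
        apply Subtype.ext
        funext j
        by_cases h : j ∈ A
        · simp [h]
        · simp [h, w.2 j h]
      right_inv := fun g => by ext k; simp }
  rw [Fintype.card_congr e, Fintype.card_fun]
  simp

lemma sum_if_const (A : Finset (Fin n)) (x : QIdx n) (c : ℂ) :
    (∑ w : QIdx n, if ∀ j ∉ A, x j = w j then c else 0) = (2 ^ A.card : ℂ) * c := by
  rw [← Finset.sum_filter, Finset.sum_const, card_match, nsmul_eq_mul]
  push_cast
  ring

lemma alpha_congr (θ : Fin n → Fin n → ℝ) (A : Finset (Fin n))
    (hA0 : ∀ j ∈ A, ∀ k ∈ A, θ j k = 0)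
    {x y : QIdx n} (hxy : ∀ j ∉ A, x j = y j) {k : Fin n} (hk : k ∈ A) :
    alphaAngle n θ k x = alphaAngle n θ k y := by
  unfold alphaAngle
  refine Finset.sum_congr rfl fun j _ => ?_
  by_cases h : j ∈ A
  · rw [hA0 j h k hk]; ring
  · rw [hxy j h]

lemma phase_shift (θ : Fin n → Fin n → ℝ) (A : Finset (Fin n))
    (hsym : ∀ j k, θ j k = θ k j)
    (hA0 : ∀ j ∈ A, ∀ k ∈ A, θ j k = 0)
    {x y : QIdx n} (hxy : ∀ j ∉ A, x j = y j) :
    (1 / 2 * ∑ j, ∑ k, θ j k * bR (x j) * bR (x k) : ℝ)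
      = (1 / 2 * ∑ j, ∑ k, θ j k * bR (y j) * bR (y k))
        + ∑ k ∈ A, alphaAngle n θ k x * (bR (x k) - bR (y k)) := by
  have hd : ∀ k : Fin n, k ∉ A → bR (x k) - bR (y k) = 0 := fun k hk => by
    rw [hxy k hk]; ring
  have claim1 : (∑ j, ∑ k, θ j k * bR (x j) * (bR (x k) - bR (y k)))
      = ∑ k ∈ A, alphaAngle n θ k x * (bR (x k) - bR (y k)) := by
    rw [Finset.sum_comm]
    have h1 : ∀ k : Fin n, (∑ j, θ j k * bR (x j) * (bR (x k) - bR (y k)))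
        = alphaAngle n θ k x * (bR (x k) - bR (y k)) := by
      intro k
      rw [alphaAngle, Finset.sum_mul]
    rw [Finset.sum_congr rfl fun k _ => h1 k]
    refine (Finset.sum_subset (Finset.subset_univ A) fun k _ hk => ?_).symm
    rw [hd k hk, mul_zero]
  have claim2 : (∑ j, ∑ k, θ j k * (bR (x j) - bR (y j)) * bR (y k))
      = ∑ j ∈ A, alphaAngle n θ j x * (bR (x j) - bR (y j)) := by
    have h1 : ∀ j : Fin n, (∑ k, θ j k * (bR (x j) - bR (y j)) * bR (y k))
        = (∑ k, θ j k * bR (y k)) * (bR (x j) - bR (y j)) := by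
      intro j
      rw [Finset.sum_mul]
      exact Finset.sum_congr rfl fun k _ => by ring
    rw [Finset.sum_congr rfl fun j _ => h1 j]
    rw [(Finset.sum_subset (Finset.subset_univ A) fun j _ hj => by
      rw [hd j hj, mul_zero]).symm]
    refine Finset.sum_congr rfl fun j hj => ?_
    congr 1
    rw [alphaAngle]
    refine Finset.sum_congr rfl fun k _ => ?_
    by_cases h : k ∈ A
    · rw [hA0 j hj k h, hA0 k h j hj]; ring
    · rw [hxy k h, hsym j k]
  have main : (∑ j, ∑ k, (θ j k * bR (x j) * bR (x k) - θ j k * bR (y j) * bR (y k)))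
      = 2 * ∑ k ∈ A, alphaAngle n θ k x * (bR (x k) - bR (y k)) := by
    have expand : ∀ j k : Fin n,
        θ j k * bR (x j) * bR (x k) - θ j k * bR (y j) * bR (y k)
          = θ j k * bR (x j) * (bR (x k) - bR (y k))
            + θ j k * (bR (x j) - bR (y j)) * bR (y k) := fun j k => by ring
    calc (∑ j, ∑ k, (θ j k * bR (x j) * bR (x k) - θ j k * bR (y j) * bR (y k)))
        = (∑ j, ∑ k, θ j k * bR (x j) * (bR (x k) - bR (y k)))
          + ∑ j, ∑ k, θ j k * (bR (x j) - bR (y j)) * bR (y k) := by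
          rw [← Finset.sum_add_distrib]
          refine Finset.sum_congr rfl fun j _ => ?_
          rw [← Finset.sum_add_distrib]
          exact Finset.sum_congr rfl fun k _ => expand j k
      _ = 2 * ∑ k ∈ A, alphaAngle n θ k x * (bR (x k) - bR (y k)) := by
          rw [claim1, claim2]; ring
  have hsub : (∑ j, ∑ k, θ j k * bR (x j) * bR (x k))
      - (∑ j, ∑ k, θ j k * bR (y j) * bR (y k))
      = ∑ j, ∑ k, (θ j k * bR (x j) * bR (x k) - θ j k * bR (y j) * bR (y k)) := by
    rw [← Finset.sum_sub_distrib]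
    exact Finset.sum_congr rfl fun j _ => (Finset.sum_sub_distrib _ _).symm
  have := hsub.trans main
  linarith

lemma phaseFac_star (α : ℝ) (b b' : Fin 2) : star (phaseFac α b b') = phaseFac α b' b := by
  unfold phaseFac
  rw [star_mul']
  congr 1
  · simp
  · rw [RCLike.star_def, ← Complex.exp_conj]
    congr 1
    rw [_root_.map_mul, Complex.conj_I, Complex.conj_ofReal]
    push_cast
    ring

lemma phaseFac_mul (α : ℝ) (a b c : Fin 2) :
    phaseFac α a b * phaseFac α b c = (1 / 2 : ℂ) * phaseFac α a c := by
  unfold phaseFac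
  rw [mul_mul_mul_comm, ← Complex.exp_add]
  have h : Complex.I * ((α * (bR a - bR b) : ℝ) : ℂ) + Complex.I * ((α * (bR b - bR c) : ℝ) : ℂ)
      = Complex.I * ((α * (bR a - bR c) : ℝ) : ℂ) := by
    push_cast
    ring
  rw [h]
  ring

lemma Pop_fix (θ : Fin n → Fin n → ℝ) (A : Finset (Fin n))
    (hsym : ∀ j k, θ j k = θ k j)
    (hA0 : ∀ j ∈ A, ∀ k ∈ A, θ j k = 0) :
    Pop n θ A *ᵥ gVec n θ = gVec n θ := by
  funext x
  have hterm : ∀ y : QIdx n, (∀ j ∉ A, x j = y j) →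
      (∏ k ∈ A, phaseFac (alphaAngle n θ k x) (x k) (y k)) * gVec n θ y
        = ((2 : ℂ) ^ A.card)⁻¹ * gVec n θ x := by
    intro y hy
    have hprod : (∏ k ∈ A, phaseFac (alphaAngle n θ k x) (x k) (y k))
        = ((2 : ℂ) ^ A.card)⁻¹ * Complex.exp (Complex.I *
            ((∑ k ∈ A, alphaAngle n θ k x * (bR (x k) - bR (y k)) : ℝ) : ℂ)) := by
      unfold phaseFac
      rw [Finset.prod_mul_distrib, Finset.prod_const, ← Complex.exp_sum]
      congr 1
      · rw [one_div, inv_pow]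
      · congr 1
        rw [Complex.ofReal_sum, Finset.mul_sum]
    have hexp : Complex.exp (Complex.I *
            ((∑ k ∈ A, alphaAngle n θ k x * (bR (x k) - bR (y k)) : ℝ) : ℂ))
        * Complex.exp (Complex.I *
            ((1 / 2 * ∑ j, ∑ k, θ j k * bR (y j) * bR (y k) : ℝ) : ℂ))
        = Complex.exp (Complex.I *
            ((1 / 2 * ∑ j, ∑ k, θ j k * bR (x j) * bR (x k) : ℝ) : ℂ)) := by
      rw [← Complex.exp_add]
      congr 1
      rw [← mul_add, ← Complex.ofReal_add]
      congr 2
      linarith [phase_shift θ A hsym hA0 hy]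
    rw [hprod]
    simp only [gVec]
    rw [← hexp]
    ring
  have hmain : (Pop n θ A *ᵥ gVec n θ) x
      = ∑ y : QIdx n, if ∀ j ∉ A, x j = y j
          then ((2 : ℂ) ^ A.card)⁻¹ * gVec n θ x else 0 := by
    rw [Matrix.mulVec, dotProduct]
    refine Finset.sum_congr rfl fun y _ => ?_
    rw [Pop, Matrix.of_apply, ite_mul, zero_mul]
    by_cases h : ∀ j ∉ A, x j = y j
    · rw [if_pos h, if_pos h, hterm y h]
    · rw [if_neg h, if_neg h]
  rw [hmain, sum_if_const, ← mul_assoc, mul_inv_cancel₀ (by positivity), one_mul]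

lemma Pop_herm (θ : Fin n → Fin n → ℝ) (A : Finset (Fin n))
    (hA0 : ∀ j ∈ A, ∀ k ∈ A, θ j k = 0) :
    (Pop n θ A).IsHermitian := by
  show _ᴴ = _
  ext x y
  rw [Matrix.conjTranspose_apply, Pop, Matrix.of_apply, Matrix.of_apply]
  by_cases h : ∀ j ∉ A, x j = y j
  · have h' : ∀ j ∉ A, y j = x j := fun j hj => (h j hj).symm
    rw [if_pos h, if_pos h', star_prod]
    refine Finset.prod_congr rfl fun k hk => ?_
    rw [phaseFac_star, alpha_congr θ A hA0 h' hk]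
  · have h' : ¬ ∀ j ∉ A, y j = x j := fun hc => h fun j hj => (hc j hj).symm
    rw [if_neg h, if_neg h', star_zero]

lemma Pop_idem (θ : Fin n → Fin n → ℝ) (A : Finset (Fin n))
    (hA0 : ∀ j ∈ A, ∀ k ∈ A, θ j k = 0) :
    Pop n θ A * Pop n θ A = Pop n θ A := by
  ext x y
  rw [Matrix.mul_apply]
  by_cases h : ∀ j ∉ A, x j = y j
  · have hterm : ∀ w : QIdx n, Pop n θ A x w * Pop n θ A w y
        = if ∀ j ∉ A, x j = w j then
            ((2 : ℂ) ^ A.card)⁻¹ * ∏ k ∈ A, phaseFac (alphaAngle n θ k x) (x k) (y k)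
          else 0 := by
      intro w
      by_cases hw : ∀ j ∉ A, x j = w j
      · have hw2 : ∀ j ∉ A, w j = y j := fun j hj => (hw j hj).symm.trans (h j hj)
        rw [if_pos hw]
        show (if ∀ j ∉ A, x j = w j then _ else 0) * (if ∀ j ∉ A, w j = y j then _ else 0) = _
        rw [if_pos hw, if_pos hw2, ← Finset.prod_mul_distrib]
        have hα : ∀ k ∈ A, alphaAngle n θ k w = alphaAngle n θ k x := fun k hk =>
          alpha_congr θ A hA0 (fun j hj => (hw j hj).symm) hk
        calc (∏ k ∈ A, phaseFac (alphaAngle n θ k x) (x k) (w k)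
                * phaseFac (alphaAngle n θ k w) (w k) (y k))
            = ∏ k ∈ A, (1 / 2 : ℂ) * phaseFac (alphaAngle n θ k x) (x k) (y k) := by
              refine Finset.prod_congr rfl fun k hk => ?_
              rw [hα k hk, phaseFac_mul]
          _ = _ := by
              rw [Finset.prod_mul_distrib, Finset.prod_const, one_div, inv_pow]
      · rw [if_neg hw]
        show (if ∀ j ∉ A, x j = w j then _ else 0) * _ = (0 : ℂ)
        rw [if_neg hw, zero_mul]
    rw [Finset.sum_congr rfl fun w _ => hterm w, sum_if_const, ← mul_assoc,
      mul_inv_cancel₀ (by positivity), one_mul]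
    show _ = (if ∀ j ∉ A, x j = y j then _ else 0)
    rw [if_pos h]
  · have hterm : ∀ w : QIdx n, Pop n θ A x w * Pop n θ A w y = 0 := by
      intro w
      by_cases hw : ∀ j ∉ A, x j = w j
      · have hw2 : ¬ ∀ j ∉ A, w j = y j := fun hc =>
          h fun j hj => (hw j hj).trans (hc j hj)
        show _ * (if ∀ j ∉ A, w j = y j then _ else 0) = (0 : ℂ)
        rw [if_neg hw2, mul_zero]
      · show (if ∀ j ∉ A, x j = w j then _ else 0) * _ = (0 : ℂ)
        rw [if_neg hw, zero_mul]
    rw [Finset.sum_congr rfl fun w _ => hterm w, Finset.sum_const, smul_zero]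
    show _ = (if ∀ j ∉ A, x j = y j then _ else 0)
    rw [if_neg h]

lemma dot_self (u : QIdx n → ℂ) :
    star u ⬝ᵥ u = ((∑ i, Complex.normSq (u i) : ℝ) : ℂ) := by
  rw [dotProduct, Complex.ofReal_sum]
  refine Finset.sum_congr rfl fun i _ => ?_
  rw [Pi.star_apply, RCLike.star_def, mul_comm, Complex.mul_conj]

lemma gVec_norm (θ : Fin n → Fin n → ℝ) : star (gVec n θ) ⬝ᵥ gVec n θ = 1 := by
  have hterm : ∀ z : QIdx n, star (gVec n θ z) * gVec n θ z = ((2 : ℂ) ^ n)⁻¹ := by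
    intro z
    simp only [gVec]
    rw [star_mul', RCLike.star_def, Complex.conj_ofReal, ← Complex.exp_conj,
      _root_.map_mul, Complex.conj_I, Complex.conj_ofReal, mul_mul_mul_comm, ← Complex.exp_add,
      neg_mul, neg_add_cancel, Complex.exp_zero, mul_one, ← Complex.ofReal_mul,
      ← mul_inv, Real.mul_self_sqrt (by positivity : (0:ℝ) ≤ (2:ℝ) ^ n)]
    push_cast
    ring
  rw [dotProduct]
  calc ∑ z : QIdx n, star (gVec n θ) z * gVec n θ z
      = ∑ _z : QIdx n, ((2 : ℂ) ^ n)⁻¹ := Finset.sum_congr rfl fun z _ => hterm z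
    _ = 1 := by
        rw [Finset.sum_const, nsmul_eq_mul, Finset.card_univ,
          show Fintype.card (QIdx n) = 2 ^ n by rw [Fintype.card_fun]; simp]
        push_cast
        rw [mul_inv_cancel₀ (by positivity)]

lemma cs (g u : QIdx n → ℂ) :
    Complex.normSq (star g ⬝ᵥ u)
      ≤ (∑ i, Complex.normSq (g i)) * (∑ i, Complex.normSq (u i)) := by
  have h := norm_inner_le_norm (𝕜 := ℂ)
    ((WithLp.equiv 2 (QIdx n → ℂ)).symm g) ((WithLp.equiv 2 (QIdx n → ℂ)).symm u)
  rw [show inner ℂ ((WithLp.equiv 2 (QIdx n → ℂ)).symm g) ((WithLp.equiv 2 (QIdx n → ℂ)).symm u)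
      = star g ⬝ᵥ u by rw [dotProduct_comm]; rfl] at h
  have hg : ‖(WithLp.equiv 2 (QIdx n → ℂ)).symm g‖
      = Real.sqrt (∑ i, Complex.normSq (g i)) := by
    rw [EuclideanSpace.norm_eq]
    congr 1
    exact Finset.sum_congr rfl fun i _ => by rw [← Complex.sq_norm]; rfl
  have hu : ‖(WithLp.equiv 2 (QIdx n → ℂ)).symm u‖
      = Real.sqrt (∑ i, Complex.normSq (u i)) := by
    rw [EuclideanSpace.norm_eq]
    congr 1
    exact Finset.sum_congr rfl fun i _ => by rw [← Complex.sq_norm]; rfl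
  rw [hg, hu] at h
  have h2 : ‖star g ⬝ᵥ u‖ ^ 2
      ≤ (Real.sqrt (∑ i, Complex.normSq (g i))
          * Real.sqrt (∑ i, Complex.normSq (u i))) ^ 2 := by
    have h0 : (0 : ℝ) ≤ ‖star g ⬝ᵥ u‖ := norm_nonneg _
    nlinarith
  rw [mul_pow, Real.sq_sqrt (Finset.sum_nonneg fun i _ => Complex.normSq_nonneg _),
    Real.sq_sqrt (Finset.sum_nonneg fun i _ => Complex.normSq_nonneg _)] at h2
  calc Complex.normSq (star g ⬝ᵥ u) = ‖star g ⬝ᵥ u‖ ^ 2 := by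
        rw [← Complex.sq_norm]
    _ ≤ _ := h2

lemma sum_mulVec {ι : Type*} (s : Finset ι) (M : ι → QOp n) (v : QIdx n → ℂ) :
    (∑ l ∈ s, M l) *ᵥ v = ∑ l ∈ s, M l *ᵥ v := by
  funext x
  simp only [Matrix.mulVec, dotProduct, Finset.sum_apply, Matrix.sum_apply,
    Finset.sum_mul]
  exact Finset.sum_comm

lemma dot_sum {ι : Type*} (s : Finset ι) (v : QIdx n → ℂ) (w : ι → QIdx n → ℂ) :
    v ⬝ᵥ (∑ l ∈ s, w l) = ∑ l ∈ s, v ⬝ᵥ w l := by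
  simp only [dotProduct, Finset.sum_apply, Finset.mul_sum]
  exact Finset.sum_comm

lemma quad_eq (P : QOp n) (hH : P.IsHermitian) (hI : P * P = P) (v : QIdx n → ℂ) :
    star v ⬝ᵥ (P *ᵥ v) = star (P *ᵥ v) ⬝ᵥ (P *ᵥ v) := by
  conv_rhs => rw [Matrix.star_mulVec, ← Matrix.dotProduct_mulVec, Matrix.mulVec_mulVec,
    show Pᴴ = P from hH, hI]

lemma quad_lower (P : QOp n) (hH : P.IsHermitian) (hI : P * P = P)
    (g : QIdx n → ℂ) (hPg : P *ᵥ g = g) (hg : star g ⬝ᵥ g = 1) (v : QIdx n → ℂ) :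
    ((Complex.normSq (star g ⬝ᵥ v) : ℝ) : ℂ) ≤ star v ⬝ᵥ (P *ᵥ v) := by
  have h1 : star v ⬝ᵥ (P *ᵥ v) = star (P *ᵥ v) ⬝ᵥ (P *ᵥ v) := quad_eq P hH hI v
  have h2 : star g ⬝ᵥ (P *ᵥ v) = star g ⬝ᵥ v := by
    rw [Matrix.dotProduct_mulVec, ← show Pᴴ = P from hH, ← Matrix.star_mulVec, hPg]
  have h3 : (∑ i, Complex.normSq (g i)) = 1 := by
    have h := (dot_self g).symm.trans hg
    exact_mod_cast h
  have h4 := cs g (P *ᵥ v)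
  rw [h2, h3, one_mul] at h4
  rw [h1, dot_self]
  exact_mod_cast h4

lemma quad_upper (P : QOp n) (hH : P.IsHermitian) (hI : P * P = P) (v : QIdx n → ℂ) :
    star v ⬝ᵥ (P *ᵥ v) ≤ star v ⬝ᵥ v := by
  have h1 : star v ⬝ᵥ (P *ᵥ v) = star (P *ᵥ v) ⬝ᵥ (P *ᵥ v) := quad_eq P hH hI v
  have h2 : star (P *ᵥ v) ⬝ᵥ v = ((∑ i, Complex.normSq ((P *ᵥ v) i) : ℝ) : ℂ) := by
    rw [Matrix.star_mulVec, show Pᴴ = P from hH, ← Matrix.dotProduct_mulVec, h1, dot_self]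
  have h4 := cs (P *ᵥ v) v
  rw [h2, Complex.normSq_ofReal] at h4
  have hann : (0:ℝ) ≤ ∑ i, Complex.normSq ((P *ᵥ v) i) :=
    Finset.sum_nonneg fun i _ => Complex.normSq_nonneg _
  have hbnn : (0:ℝ) ≤ ∑ i, Complex.normSq (v i) :=
    Finset.sum_nonneg fun i _ => Complex.normSq_nonneg _
  have hab : (∑ i, Complex.normSq ((P *ᵥ v) i)) ≤ ∑ i, Complex.normSq (v i) := by
    nlinarith
  rw [h1, dot_self, dot_self]
  exact_mod_cast hab

end GraphStateAux


/-- Each projection `P_l` fixes the weighted graph state, hence `Ω(𝒜)|G⟩ = |G⟩`,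
`⟨G|Ω(𝒜)|G⟩ = 1` and `|G⟩⟨G| ≤ Ω(𝒜) ≤ I`. -/
theorem Pop_fixes_graphState
    (n m : ℕ) (hn : 1 ≤ n) (hm : 1 ≤ m)
    (G : SimpleGraph (Fin n)) (θ : Fin n → Fin n → ℝ)
    (hsym : ∀ j k, θ j k = θ k j)
    (hθ : ∀ j k, ¬ G.Adj j k → θ j k = 0)
    (A : Fin m → Finset (Fin n))
    (hdisj : ∀ l l', l ≠ l' → Disjoint (A l) (A l'))
    (hcover : ∀ v : Fin n, ∃ l, v ∈ A l)
    (hne : ∀ l, (A l).Nonempty)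
    (hind : ∀ l, ∀ j ∈ A l, ∀ k ∈ A l, ¬ G.Adj j k)
    :
    (∀ l, Pop n θ (A l) *ᵥ gVec n θ = gVec n θ) ∧
    OmegaA n m θ A *ᵥ gVec n θ = gVec n θ ∧
    star (gVec n θ) ⬝ᵥ (OmegaA n m θ A *ᵥ gVec n θ) = 1 ∧
    (OmegaA n m θ A - gProj n θ).PosSemidef ∧
    ((1 : QOp n) - OmegaA n m θ A).PosSemidef := by
  have hA0 : ∀ l, ∀ j ∈ A l, ∀ k ∈ A l, θ j k = 0 :=
    fun l j hj k hk => hθ j k (hind l j hj k hk)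
  have hfix : ∀ l, Pop n θ (A l) *ᵥ gVec n θ = gVec n θ :=
    fun l => GraphStateAux.Pop_fix θ (A l) hsym (hA0 l)
  have hherm : ∀ l, (Pop n θ (A l)).IsHermitian :=
    fun l => GraphStateAux.Pop_herm θ (A l) (hA0 l)
  have hidem : ∀ l, Pop n θ (A l) * Pop n θ (A l) = Pop n θ (A l) :=
    fun l => GraphStateAux.Pop_idem θ (A l) (hA0 l)
  have hm0 : (m : ℂ) ≠ 0 := Nat.cast_ne_zero.mpr (by omega)
  have hgnorm : star (gVec n θ) ⬝ᵥ gVec n θ = 1 := GraphStateAux.gVec_norm θ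
  have hΩg : OmegaA n m θ A *ᵥ gVec n θ = gVec n θ := by
    unfold OmegaA
    rw [Matrix.smul_mulVec, GraphStateAux.sum_mulVec,
      Finset.sum_congr rfl fun l _ => hfix l, Finset.sum_const, Finset.card_univ,
      Fintype.card_fin, ← Nat.cast_smul_eq_nsmul ℂ, smul_smul, inv_mul_cancel₀ hm0, one_smul]
  have hΩherm : (OmegaA n m θ A).IsHermitian := by
    show _ᴴ = _
    unfold OmegaA
    rw [Matrix.conjTranspose_smul]
    congr 1
    · simp
    · rw [Matrix.conjTranspose_sum]
      exact Finset.sum_congr rfl fun l _ => hherm l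
  have hgH : (gProj n θ).IsHermitian := by
    show _ᴴ = _
    ext x y
    simp [gProj, Matrix.conjTranspose_apply, Matrix.vecMulVec_apply, mul_comm]
  have hΩquad : ∀ v : QIdx n → ℂ, star v ⬝ᵥ (OmegaA n m θ A *ᵥ v)
      = (m : ℂ)⁻¹ * ∑ l, star v ⬝ᵥ (Pop n θ (A l) *ᵥ v) := by
    intro v
    unfold OmegaA
    rw [Matrix.smul_mulVec, GraphStateAux.sum_mulVec, dotProduct_smul,
      GraphStateAux.dot_sum, smul_eq_mul]
  have hmn : (0 : ℂ) ≤ (m : ℂ)⁻¹ := by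
    have hcast : ((m : ℂ))⁻¹ = Complex.ofReal ((m : ℝ)⁻¹) := by push_cast; ring
    rw [hcast]
    exact Complex.zero_le_real.mpr (inv_nonneg.mpr (Nat.cast_nonneg m))
  refine ⟨hfix, hΩg, by rw [hΩg]; exact hgnorm, Matrix.PosSemidef.of_dotProduct_mulVec_nonneg (hΩherm.sub hgH) ?_,
    Matrix.PosSemidef.of_dotProduct_mulVec_nonneg (Matrix.isHermitian_one.sub hΩherm) ?_⟩
  · intro v
    have hproj : star v ⬝ᵥ (gProj n θ *ᵥ v)
        = ((Complex.normSq (star (gVec n θ) ⬝ᵥ v) : ℝ) : ℂ) := by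
      have hmv : gProj n θ *ᵥ v = fun x => gVec n θ x * (star (gVec n θ) ⬝ᵥ v) := by
        funext x
        rw [Matrix.mulVec, dotProduct, dotProduct, Finset.mul_sum]
        exact Finset.sum_congr rfl fun y _ => by
          simp only [gProj, Matrix.vecMulVec_apply, Pi.star_apply]
          ring
      rw [hmv, dotProduct]
      have hswap : (∑ x, star v x * gVec n θ x) = star (star (gVec n θ) ⬝ᵥ v) := by
        rw [dotProduct, star_sum]
        exact Finset.sum_congr rfl fun i _ => by
          simp only [Pi.star_apply, star_mul', star_star]
          ring
      calc (∑ x, star v x * (gVec n θ x * (star (gVec n θ) ⬝ᵥ v)))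
          = (∑ x, star v x * gVec n θ x) * (star (gVec n θ) ⬝ᵥ v) := by
            rw [Finset.sum_mul]
            exact Finset.sum_congr rfl fun x _ => by ring
        _ = star (star (gVec n θ) ⬝ᵥ v) * (star (gVec n θ) ⬝ᵥ v) := by rw [hswap]
        _ = _ := by
            rw [RCLike.star_def, mul_comm, Complex.mul_conj]
    have hlow := fun l : Fin m => GraphStateAux.quad_lower (Pop n θ (A l)) (hherm l)
      (hidem l) (gVec n θ) (hfix l) hgnorm v
    have hsum : (m : ℂ) * ((Complex.normSq (star (gVec n θ) ⬝ᵥ v) : ℝ) : ℂ)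
        ≤ ∑ l, star v ⬝ᵥ (Pop n θ (A l) *ᵥ v) := by
      calc (m : ℂ) * ((Complex.normSq (star (gVec n θ) ⬝ᵥ v) : ℝ) : ℂ)
          = ∑ _l : Fin m, ((Complex.normSq (star (gVec n θ) ⬝ᵥ v) : ℝ) : ℂ) := by
            rw [Finset.sum_const, Finset.card_univ, Fintype.card_fin, nsmul_eq_mul]
        _ ≤ _ := Finset.sum_le_sum fun l _ => hlow l
    have hfin := mul_le_mul_of_nonneg_left hsum hmn
    rw [← mul_assoc, inv_mul_cancel₀ hm0, one_mul] at hfin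
    rw [Matrix.sub_mulVec, dotProduct_sub, hΩquad v, hproj, sub_nonneg]
    exact hfin
  · intro v
    have hup := fun l : Fin m => GraphStateAux.quad_upper (Pop n θ (A l)) (hherm l)
      (hidem l) v
    have hsum : (∑ l, star v ⬝ᵥ (Pop n θ (A l) *ᵥ v)) ≤ (m : ℂ) * (star v ⬝ᵥ v) := by
      calc (∑ l, star v ⬝ᵥ (Pop n θ (A l) *ᵥ v))
          ≤ ∑ _l : Fin m, star v ⬝ᵥ v := Finset.sum_le_sum fun l _ => hup l
        _ = (m : ℂ) * (star v ⬝ᵥ v) := by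
            rw [Finset.sum_const, Finset.card_univ, Fintype.card_fin, nsmul_eq_mul]
    have hfin := mul_le_mul_of_nonneg_left hsum hmn
    rw [← mul_assoc, inv_mul_cancel₀ hm0, one_mul] at hfin
    rw [Matrix.sub_mulVec, dotProduct_sub, Matrix.one_mulVec, hΩquad v, sub_nonneg]
    exact hfin

end
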